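/- Let G be obtained from C_n by adding a set X of chords. If X contains two adjacent chords (chords sharing an endpoint), then G has at most one cycle that passes through every chord in X; if no two chords in X are adjacent, then G has at most two such cycles. -/

import Mathlib

open SimpleGraph

/-- `e` is a chord of the cycle graph `Cₙ`: an edge between two distinct,
non-adjacent vertices of the cycle. -/
def IsChord (n : ℕ) (e : Sym2 (Fin n)) : Prop :=
  ¬ e.IsDiag ∧ e ∉ (cycleGraph n).edgeSet

/-- The set of edge sets of cycles of a graph `G`; this identifies a cycle
with its edge set, so that each cycle is counted exactly once. -/
def cycleEdgeSets {V : Type*} [DecidableEq V] (G : SimpleGraph V) : Set (Finset (Sym2 V)) :=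
  {E | ∃ (v : V) (w : G.Walk v v), w.IsCycle ∧ w.edges.toFinset = E}
/-- Two chords are adjacent if they are distinct and share an endpoint. -/
def AdjacentChords {n : ℕ} (e f : Sym2 (Fin n)) : Prop :=
  e ≠ f ∧ ∃ v : Fin n, v ∈ e ∧ v ∈ f

private lemma countP_edges_isPath {V : Type*} [DecidableEq V] {G : SimpleGraph V}
    {a b : V} (p : G.Walk a b) (hp : p.IsPath) (u : V) :
    p.edges.countP (fun e => u ∈ e) =
      (if u = a ∧ u ≠ b then 1 else 0) + (if u = b ∧ u ≠ a then 1 else 0) +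
      (if u ∈ p.support ∧ u ≠ a ∧ u ≠ b then 2 else 0) := by
  induction p with
  | nil => simp
  | @cons a c b h q ih =>
    rw [Walk.cons_isPath_iff] at hp
    have hq := ih hp.1
    have hac : a ≠ c := h.ne
    have hb : b ∈ q.support := q.end_mem_support
    have hc : c ∈ q.support := q.start_mem_support
    have hna : a ∉ q.support := hp.2
    have hab : a ≠ b := fun hh => hna (hh ▸ hb)
    rw [Walk.edges_cons, List.countP_cons, hq]
    simp only [decide_eq_true_eq, Sym2.mem_iff, Walk.support_cons, List.mem_cons]
    by_cases h1 : u = a <;> by_cases h2 : u = c <;> by_cases h3 : u = b <;>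
      by_cases h4 : u ∈ q.support <;> simp_all

private lemma countP_edges_isCycle {V : Type*} [DecidableEq V] {G : SimpleGraph V}
    {v : V} (w : G.Walk v v) (hw : w.IsCycle) (u : V) :
    w.edges.countP (fun e => u ∈ e) = 0 ∨ w.edges.countP (fun e => u ∈ e) = 2 := by
  cases w with
  | nil => exact absurd rfl hw.ne_nil
  | @cons _ c _ h q =>
    rw [Walk.cons_isCycle_iff] at hw
    have hq := countP_edges_isPath q hw.1 u
    have hvc : v ≠ c := h.ne
    rw [Walk.edges_cons, List.countP_cons, hq]
    simp only [decide_eq_true_eq, Sym2.mem_iff]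
    by_cases h1 : u = v <;> by_cases h2 : u = c <;>
      by_cases h4 : u ∈ q.support <;> simp_all

private lemma val_one_eq {n : ℕ} [NeZero n] (hn : 3 ≤ n) : (1 : Fin n).val = 1 := by
  rw [Fin.val_one', Nat.mod_eq_of_lt (by omega)]

private lemma cyc_edge_form {n : ℕ} [NeZero n] (hn : 3 ≤ n) {e : Sym2 (Fin n)}
    (he : e ∈ (cycleGraph n).edgeSet) : ∃ k : Fin n, e = s(k, k + 1) := by
  induction e with
  | _ a b =>
    rw [mem_edgeSet, cycleGraph_adj'] at he
    rcases he with h | h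
    · have hab : a = b + 1 := by
        rw [← sub_eq_iff_eq_add']
        exact Fin.val_injective (h.trans (val_one_eq hn).symm)
      exact ⟨b, by rw [hab, Sym2.eq_swap]⟩
    · have hab : b = a + 1 := by
        rw [← sub_eq_iff_eq_add']
        exact Fin.val_injective (h.trans (val_one_eq hn).symm)
      exact ⟨a, by rw [hab]⟩

private lemma cyc_edge_mem {n : ℕ} [NeZero n] (hn : 3 ≤ n) (k : Fin n) :
    s(k, k + 1) ∈ (cycleGraph n).edgeSet := by
  rw [mem_edgeSet, cycleGraph_adj']
  right
  rw [add_sub_cancel_left, val_one_eq hn]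

private lemma cyc_edge_at {n : ℕ} [NeZero n] (hn : 3 ≤ n) {u : Fin n} {e : Sym2 (Fin n)}
    (he : e ∈ (cycleGraph n).edgeSet) (hu : u ∈ e) :
    e = s(u - 1, u) ∨ e = s(u, u + 1) := by
  obtain ⟨k, rfl⟩ := cyc_edge_form hn he
  rw [Sym2.mem_iff] at hu
  rcases hu with rfl | rfl
  · right; rfl
  · left; rw [add_sub_cancel_right, Sym2.eq_swap]

open Fin.CommRing in
/-- If a set `X` of chords is added to `Cₙ`, then the number of cycles of the
resulting graph passing through every chord of `X` is at most `1` if `X`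
contains two adjacent chords, and at most `2` if no two chords of `X` are
adjacent. -/
theorem stmt_3 (n : ℕ) (hn : 3 ≤ n) (X : Finset (Sym2 (Fin n)))
    (hchords : ∀ e ∈ X, IsChord n e) :
    ((∃ e ∈ X, ∃ f ∈ X, AdjacentChords e f) →
      {E ∈ cycleEdgeSets (cycleGraph n ⊔ fromEdgeSet ↑X) | X ⊆ E}.ncard ≤ 1) ∧
    ((∀ e ∈ X, ∀ f ∈ X, ¬ AdjacentChords e f) →
      {E ∈ cycleEdgeSets (cycleGraph n ⊔ fromEdgeSet ↑X) | X ⊆ E}.ncard ≤ 2) := by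
  haveI : NeZero n := ⟨by omega⟩
  set G : SimpleGraph (Fin n) := cycleGraph n ⊔ fromEdgeSet ↑X with hG
  set S := {E ∈ cycleEdgeSets G | X ⊆ E} with hS
  have hX : ∀ e ∈ X, e ∉ (cycleGraph n).edgeSet := fun e he => (hchords e he).2
  -- every edge of an element of `S` is a chord or a cycle edge
  have hmem : ∀ E ∈ S, ∀ e ∈ E, e ∈ X ∨ ∃ k : Fin n, e = s(k, k + 1) := by
    rintro E ⟨⟨v, w, hw, rfl⟩, hXE⟩ e he
    rw [List.mem_toFinset] at he
    have h := w.edges_subset_edgeSet he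
    rw [hG, edgeSet_sup, Set.mem_union, edgeSet_fromEdgeSet] at h
    rcases h with h | h
    · exact Or.inr (cyc_edge_form hn h)
    · exact Or.inl h.1
  -- degree condition
  have hdeg : ∀ E ∈ S, ∀ u : Fin n,
      (X.filter (fun e => u ∈ e)).card
        + (if s(u - 1, u) ∈ E then 1 else 0) + (if s(u, u + 1) ∈ E then 1 else 0) = 0 ∨
      (X.filter (fun e => u ∈ e)).card
        + (if s(u - 1, u) ∈ E then 1 else 0) + (if s(u, u + 1) ∈ E then 1 else 0) = 2 := by
    intro E hE u
    have hmemE := hmem E hE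
    obtain ⟨⟨v, w, hw, rfl⟩, hXE⟩ := hE
    set E := w.edges.toFinset with hEdef
    have hcount := countP_edges_isCycle w hw u
    have hnodup : w.edges.Nodup := hw.edges_nodup
    have h1 : (E.filter (fun e => u ∈ e)).card = w.edges.countP (fun e => u ∈ e) := by
      rw [hEdef]
      rw [show (Finset.filter (fun e => u ∈ e) w.edges.toFinset)
            = Finset.filter (fun e => decide (u ∈ e) = true) w.edges.toFinset
          from by simp only [decide_eq_true_eq]]
      rw [← List.toFinset_filter, List.toFinset_card_of_nodup (hnodup.filter _),
        ← List.countP_eq_length_filter]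
    have hone : (u - 1) + 1 = u := by ring
    have hpq : s(u - 1, u) ≠ s(u, u + 1) := by
      intro hcontra
      rw [Sym2.eq, Sym2.rel_iff'] at hcontra
      rcases hcontra with h | h
      · have : u - 1 = u := congrArg Prod.fst h
        rw [sub_eq_self] at this
        exact absurd (congrArg Fin.val this) (by rw [val_one_eq hn]; simp)
      · have h2 : u - 1 = u + 1 := congrArg Prod.fst h
        have h3 : u = u + (1 + 1) := by
          rw [← add_assoc, ← h2, hone]
        have h4 : (1 + 1 : Fin n) = 0 := (left_eq_add.mp h3)
        have := congrArg Fin.val h4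
        rw [Fin.val_add, val_one_eq hn, Nat.mod_eq_of_lt (by omega)] at this
        simp at this
    have hsplit : E.filter (fun e => u ∈ e)
        = X.filter (fun e => u ∈ e) ∪ (E ∩ {s(u - 1, u), s(u, u + 1)}) := by
      ext e
      simp only [Finset.mem_filter, Finset.mem_union, Finset.mem_inter, Finset.mem_insert,
        Finset.mem_singleton]
      constructor
      · rintro ⟨heE, hue⟩
        rcases hmemE e heE with hx | ⟨k, rfl⟩
        · exact Or.inl ⟨hx, hue⟩
        · exact Or.inr ⟨heE, cyc_edge_at hn (cyc_edge_mem hn k) hue⟩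
      · rintro (⟨hx, hue⟩ | ⟨heE, (rfl | rfl)⟩)
        · exact ⟨hXE hx, hue⟩
        · exact ⟨heE, by rw [Sym2.mem_iff]; right; rfl⟩
        · exact ⟨heE, by rw [Sym2.mem_iff]; left; rfl⟩
    have hdisj : Disjoint (X.filter (fun e => u ∈ e)) (E ∩ {s(u - 1, u), s(u, u + 1)}) := by
      rw [Finset.disjoint_left]
      rintro e he1 he2
      have hcyc : e ∈ (cycleGraph n).edgeSet := by
        rcases Finset.mem_insert.mp (Finset.mem_inter.mp he2).2 with rfl | h
        · have := cyc_edge_mem hn (u - 1)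
          rwa [hone] at this
        · rw [Finset.mem_singleton] at h
          rw [h]
          exact cyc_edge_mem hn u
      exact hX e (Finset.mem_filter.mp he1).1 hcyc
    have hpair : (E ∩ {s(u - 1, u), s(u, u + 1)}).card
        = (if s(u - 1, u) ∈ E then 1 else 0) + (if s(u, u + 1) ∈ E then 1 else 0) := by
      have : E ∩ {s(u - 1, u), s(u, u + 1)}
          = ({s(u - 1, u), s(u, u + 1)} : Finset _).filter (· ∈ E) := by
        ext x
        simp only [Finset.mem_inter, Finset.mem_filter, and_comm]
      rw [this, Finset.filter_insert, Finset.filter_singleton]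
      by_cases h1 : s(u - 1, u) ∈ E <;> by_cases h2 : s(u, u + 1) ∈ E <;>
        simp [h1, h2, hpq]
    rw [← h1, hsplit, Finset.card_union_of_disjoint hdisj, hpair] at hcount
    omega
  -- propagation step
  have hstep : ∀ E₁ ∈ S, ∀ E₂ ∈ S, ∀ k : Fin n,
      (s(k, k + 1) ∈ E₁ ↔ s(k, k + 1) ∈ E₂) →
      (s(k + 1, k + 1 + 1) ∈ E₁ ↔ s(k + 1, k + 1 + 1) ∈ E₂) := by
    intro E₁ h₁ E₂ h₂ k hk
    have d₁ := hdeg E₁ h₁ (k + 1)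
    have d₂ := hdeg E₂ h₂ (k + 1)
    rw [add_sub_cancel_right] at d₁ d₂
    by_cases a1 : s(k, k + 1) ∈ E₁ <;> by_cases a2 : s(k, k + 1) ∈ E₂ <;>
      by_cases b1 : s(k + 1, k + 1 + 1) ∈ E₁ <;> by_cases b2 : s(k + 1, k + 1 + 1) ∈ E₂ <;>
      simp only [a1, a2, b1, b2, if_true, if_false, iff_true, iff_false] at hk d₁ d₂ ⊢ <;>
      first | rfl | tauto | omega
  -- agreement on one cycle edge implies equality
  have hagree : ∀ E₁ ∈ S, ∀ E₂ ∈ S, ∀ v : Fin n,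
      (s(v, v + 1) ∈ E₁ ↔ s(v, v + 1) ∈ E₂) → E₁ = E₂ := by
    intro E₁ h₁ E₂ h₂ v hv
    have key : ∀ j : ℕ, (s(v + j, v + j + 1) ∈ E₁ ↔ s(v + j, v + j + 1) ∈ E₂) := by
      intro j
      induction j with
      | zero => simpa using hv
      | succ j ih =>
        have hc : (v + ((j + 1 : ℕ) : Fin n)) = v + (j : ℕ) + 1 := by push_cast; ring
        rw [hc]
        exact hstep E₁ h₁ E₂ h₂ (v + (j : ℕ)) ih
    have keyk : ∀ k : Fin n, (s(k, k + 1) ∈ E₁ ↔ s(k, k + 1) ∈ E₂) := by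
      intro k
      have h := key ((k - v).val)
      rwa [show v + (((k - v).val : ℕ) : Fin n) = k by rw [Fin.cast_val_eq_self]; ring] at h
    refine Finset.Subset.antisymm (fun e he => ?_) (fun e he => ?_)
    · rcases hmem E₁ h₁ e he with hx | ⟨k, rfl⟩
      · exact h₂.2 hx
      · exact (keyk k).mp he
    · rcases hmem E₂ h₂ e he with hx | ⟨k, rfl⟩
      · exact h₁.2 hx
      · exact (keyk k).mpr he
  constructor
  · rintro ⟨e, he, f, hf, hef, u, hue, huf⟩
    have hforced : ∀ E ∈ S, s(u, u + 1) ∉ E := by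
      intro E hE
      have d := hdeg E hE u
      have hc : 1 < (X.filter (fun e => u ∈ e)).card :=
        Finset.one_lt_card.mpr ⟨e, Finset.mem_filter.mpr ⟨he, hue⟩,
          f, Finset.mem_filter.mpr ⟨hf, huf⟩, hef⟩
      by_cases b : s(u, u + 1) ∈ E <;> by_cases b' : s(u - 1, u) ∈ E <;>
        simp only [b, b', if_true, if_false] at d <;> first | exact b | exact absurd d (by omega)
    have hss : S.Subsingleton := fun E₁ h₁ E₂ h₂ =>
      hagree E₁ h₁ E₂ h₂ u (by simp [hforced E₁ h₁, hforced E₂ h₂])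
    rcases hss.eq_empty_or_singleton with h | ⟨a, h⟩ <;> rw [h] <;> simp
  · intro _
    have hinj : Set.InjOn (fun E => decide (s((0 : Fin n), 1) ∈ E)) S := by
      intro E₁ h₁ E₂ h₂ hEq
      have hiff : (s((0 : Fin n), 1) ∈ E₁) ↔ (s((0 : Fin n), 1) ∈ E₂) :=
        decide_eq_decide.mp hEq
      apply hagree E₁ h₁ E₂ h₂ 0
      rwa [zero_add]
    calc S.ncard = ((fun E => decide (s((0 : Fin n), 1) ∈ E)) '' S).ncard :=
          (Set.ncard_image_of_injOn hinj).symm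
      _ ≤ (Set.univ : Set Bool).ncard :=
          Set.ncard_le_ncard (Set.subset_univ _) Set.finite_univ
      _ = 2 := by rw [Set.ncard_univ, Nat.card_eq_fintype_card, Fintype.card_bool]
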